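/- Every 2-qubit parameterised IQP circuit output distribution coincides with that of a classical stochastic bitflip circuit: with q_1 = cos²θ_1, q_2 = cos²θ_2, q_12 = cos²θ_12, one has p(00) = q_1 q_2 q_12 + (1-q_1)(1-q_2)(1-q_12), p(10) = q_1(1-q_2)(1-q_12) + (1-q_1)q_2 q_12, p(01) = (1-q_1)q_2(1-q_12) + q_1(1-q_2)q_12, and p(11) = (1-q_1)(1-q_2)q_12 + q_1 q_2(1-q_12), where p(x) = |⟨x|U(θ)|00⟩|². -/

import Mathlib

open Finset Matrix

noncomputable section

abbrev Bits (n : ℕ) := Fin n → Bool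

def bdot {n : ℕ} (a z : Bits n) : ℕ := (Finset.univ.filter fun i => a i ∧ z i).card

def wt {n : ℕ} (a : Bits n) : ℕ := (Finset.univ.filter fun i => a i).card

def Zword {n : ℕ} (a : Bits n) : Matrix (Bits n) (Bits n) ℂ :=
  Matrix.diagonal fun z => (-1 : ℂ) ^ bdot a z

def Xword {n : ℕ} (g : Bits n) : Matrix (Bits n) (Bits n) ℂ :=
  Matrix.of fun x y => if (fun i => xor (y i) (g i)) = x then 1 else 0

def gateX {n : ℕ} (θ : ℝ) (g : Bits n) : Matrix (Bits n) (Bits n) ℂ :=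
  NormedSpace.exp ((Complex.I * (θ : ℂ)) • Xword g)

def gateZ {n : ℕ} (θ : ℝ) (g : Bits n) : Matrix (Bits n) (Bits n) ℂ :=
  NormedSpace.exp ((Complex.I * (θ : ℂ)) • Zword g)

def Ucirc {n m : ℕ} (θ : Fin m → ℝ) (g : Fin m → Bits n) : Matrix (Bits n) (Bits n) ℂ :=
  (List.ofFn fun j => gateX (θ j) (g j)).prod

def zeroBits (n : ℕ) : Bits n := fun _ => false


theorem exp_involutive {𝔸 : Type*} [NormedRing 𝔸] [NormedAlgebra ℂ 𝔸] [CompleteSpace 𝔸]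
    (a : 𝔸) (h : a * a = 1) (θ : ℝ) :
    NormedSpace.exp ((Complex.I * (θ : ℂ)) • a) =
      ((Real.cos θ : ℂ)) • (1 : 𝔸) + (Complex.I * (Real.sin θ : ℂ)) • a := by
  have ha2 : a ^ 2 = 1 := by rw [sq]; exact h
  have key : HasSum (fun n : ℕ => ((n.factorial : ℂ)⁻¹) • ((Complex.I * (θ:ℂ)) • a) ^ n)
      (((Real.cos θ : ℂ)) • (1 : 𝔸) + (Complex.I * (Real.sin θ : ℂ)) • a) := by
    refine HasSum.even_add_odd ?_ ?_
    · have hc : HasSum (fun n : ℕ => ((-1:ℂ)^n * (θ:ℂ)^(2*n) / ((2*n).factorial : ℂ)) • (1:𝔸))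
          (((Real.cos θ : ℂ)) • (1:𝔸)) := by
        have := (Complex.hasSum_cos (θ:ℂ)).smul_const (1:𝔸)
        rwa [← Complex.ofReal_cos] at this
      convert hc using 2 with n
      rw [smul_pow, pow_mul a, ha2, one_pow, smul_smul]
      congr 1
      rw [pow_mul, mul_pow, Complex.I_sq, neg_one_mul, neg_pow, ← pow_mul]
      ring
    · have hs : HasSum
          (fun n : ℕ => (Complex.I * ((-1:ℂ)^n * (θ:ℂ)^(2*n+1) / ((2*n+1).factorial : ℂ))) • a)
          ((Complex.I * (Real.sin θ : ℂ)) • a) := by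
        have := ((Complex.hasSum_sin (θ:ℂ)).mul_left Complex.I).smul_const a
        rwa [← Complex.ofReal_sin] at this
      convert hs using 2 with n
      rw [smul_pow, pow_succ a, pow_mul a, ha2, one_pow, one_mul, smul_smul]
      congr 1
      rw [pow_succ, pow_mul, mul_pow, Complex.I_sq, neg_one_mul, neg_pow, ← pow_mul]
      ring
  exact (NormedSpace.exp_series_hasSum_exp' (𝕂 := ℂ) _).unique key

theorem Xword_sq {n : ℕ} (g : Bits n) : Xword g * Xword g = 1 := by
  ext x y
  simp only [Xword, Matrix.mul_apply, Matrix.of_apply, Matrix.one_apply, mul_ite, mul_one,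
    mul_zero, ite_mul, one_mul, zero_mul]
  rw [Finset.sum_ite_eq (Finset.univ : Finset (Bits n)) (fun i => xor (y i) (g i))]
  simp only [Finset.mem_univ, if_true]
  have : (fun i => xor (xor (y i) (g i)) (g i)) = y := by
    funext i; simp [Bool.xor_assoc]
  rw [this]
  simp [eq_comm]

theorem gateX_eq {n : ℕ} (θ : ℝ) (g : Bits n) :
    gateX θ g = ((Real.cos θ : ℂ)) • (1 : Matrix (Bits n) (Bits n) ℂ)
      + (Complex.I * (Real.sin θ : ℂ)) • Xword g := by
  letI : SeminormedRing (Matrix (Bits n) (Bits n) ℂ) := Matrix.linftyOpSemiNormedRing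
  letI : NormedRing (Matrix (Bits n) (Bits n) ℂ) := Matrix.linftyOpNormedRing
  letI : NormedAlgebra ℂ (Matrix (Bits n) (Bits n) ℂ) := Matrix.linftyOpNormedAlgebra
  exact exp_involutive (Xword g) (Xword_sq g) θ

def evec {n : ℕ} (y : Bits n) : Bits n → ℂ := fun w => if w = y then 1 else 0

theorem Xword_mulVec {n : ℕ} (g y : Bits n) :
    (Xword g).mulVec (evec y) = evec (fun i => xor (y i) (g i)) := by
  funext x
  simp only [Matrix.mulVec, dotProduct, Xword, evec, Matrix.of_apply, mul_ite, mul_one,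
    mul_zero, ite_mul, one_mul, zero_mul]
  rw [Finset.sum_ite_eq' (Finset.univ : Finset (Bits n)) y]
  simp [eq_comm]

/-- a 2-qubit parameterised IQP circuit output distribution coincides
with that of a classical stochastic bitflip circuit with q₁ = cos²θ₁, q₂ = cos²θ₂,
q₁₂ = cos²θ₁₂. -/
theorem two_qubit_iqp_is_bitflip (θ1 θ2 θ12 : ℝ) :
    let g1 : Bits 2 := ![true, false]
    let g2 : Bits 2 := ![false, true]
    let g12 : Bits 2 := ![true, true]
    let U : Matrix (Bits 2) (Bits 2) ℂ := gateX θ12 g12 * gateX θ1 g1 * gateX θ2 g2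
    let p : Bits 2 → ℝ := fun x =>
      ‖(U.mulVec fun w => if w = ![false, false] then (1 : ℂ) else 0) x‖ ^ 2
    let q1 : ℝ := Real.cos θ1 ^ 2
    let q2 : ℝ := Real.cos θ2 ^ 2
    let q12 : ℝ := Real.cos θ12 ^ 2
    p ![false, false] = q1 * q2 * q12 + (1 - q1) * (1 - q2) * (1 - q12) ∧
    p ![true, false] = q1 * (1 - q2) * (1 - q12) + (1 - q1) * q2 * q12 ∧
    p ![false, true] = (1 - q1) * q2 * (1 - q12) + q1 * (1 - q2) * q12 ∧
    p ![true, true] = (1 - q1) * (1 - q2) * q12 + q1 * q2 * (1 - q12) := by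
  intro g1 g2 g12 U p q1 q2 q12
  set c1 : ℂ := (Real.cos θ1 : ℂ) with hc1
  set c2 : ℂ := (Real.cos θ2 : ℂ) with hc2
  set c3 : ℂ := (Real.cos θ12 : ℂ) with hc3
  set s1 : ℂ := Complex.I * (Real.sin θ1 : ℂ) with hs1
  set s2 : ℂ := Complex.I * (Real.sin θ2 : ℂ) with hs2
  set s3 : ℂ := Complex.I * (Real.sin θ12 : ℂ) with hs3
  have hmv : ∀ (θ : ℝ) (g : Bits 2) (v : Bits 2 → ℂ),
      (gateX θ g).mulVec v
        = ((Real.cos θ : ℂ)) • v + (Complex.I * (Real.sin θ : ℂ)) • (Xword g).mulVec v := by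
    intro θ g v
    rw [gateX_eq, Matrix.add_mulVec, Matrix.smul_mulVec, Matrix.smul_mulVec,
      Matrix.one_mulVec]
  have f2 : ∀ y : Bits 2, (Xword g2).mulVec (evec y) = evec ![y 0, !(y 1)] := by
    intro y
    have hfun : (fun i => xor (y i) (g2 i)) = ![y 0, !(y 1)] := by
      funext i; fin_cases i <;> simp [g2]
    rw [Xword_mulVec, hfun]
  have f1 : ∀ y : Bits 2, (Xword g1).mulVec (evec y) = evec ![!(y 0), y 1] := by
    intro y
    have hfun : (fun i => xor (y i) (g1 i)) = ![!(y 0), y 1] := by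
      funext i; fin_cases i <;> simp [g1]
    rw [Xword_mulVec, hfun]
  have f12 : ∀ y : Bits 2, (Xword g12).mulVec (evec y) = evec ![!(y 0), !(y 1)] := by
    intro y
    have hfun : (fun i => xor (y i) (g12 i)) = ![!(y 0), !(y 1)] := by
      funext i; fin_cases i <;> simp [g12]
    rw [Xword_mulVec, hfun]
  have hV : U.mulVec (evec ![false,false]) =
      (c3 * (c1 * c2) + s3 * (s1 * s2)) • evec ![false,false]
      + (c3 * (c1 * s2) + s3 * (s1 * c2)) • evec ![false,true]
      + (c3 * (s1 * c2) + s3 * (c1 * s2)) • evec ![true,false]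
      + (c3 * (s1 * s2) + s3 * (c1 * c2)) • evec ![true,true] := by
    show (gateX θ12 g12 * gateX θ1 g1 * gateX θ2 g2).mulVec (evec ![false,false]) = _
    rw [← Matrix.mulVec_mulVec, ← Matrix.mulVec_mulVec]
    rw [hmv θ2, f2]
    simp only [Matrix.mulVec_add, Matrix.mulVec_smul]
    rw [hmv θ1, hmv θ1, f1, f1]
    simp only [Matrix.mulVec_add, Matrix.mulVec_smul]
    rw [hmv θ12, hmv θ12, hmv θ12, hmv θ12, f12, f12, f12, f12]
    simp only [Matrix.cons_val_zero, Matrix.cons_val_one, Matrix.head_cons, Bool.not_false,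
      Bool.not_true, ← hc1, ← hc2, ← hc3, ← hs1, ← hs2, ← hs3]
    funext w
    simp only [Pi.add_apply, Pi.smul_apply, smul_eq_mul]
    ring
  have hamp : ∀ x : Bits 2, (U.mulVec fun w => if w = ![false, false] then (1 : ℂ) else 0) x =
      (c3 * (c1 * c2) + s3 * (s1 * s2)) * evec ![false,false] x
      + (c3 * (c1 * s2) + s3 * (s1 * c2)) * evec ![false,true] x
      + (c3 * (s1 * c2) + s3 * (c1 * s2)) * evec ![true,false] x
      + (c3 * (s1 * s2) + s3 * (c1 * c2)) * evec ![true,true] x := by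
    intro x
    have : (fun w => if w = ![false, false] then (1 : ℂ) else 0) = evec ![false,false] := rfl
    rw [this, hV]
    simp [Pi.add_apply, Pi.smul_apply, smul_eq_mul]
  have hnorm : ∀ A B : ℝ, ‖(A:ℂ) + Complex.I * (B:ℂ)‖ ^ 2 = A ^ 2 + B ^ 2 := by
    intro A B
    rw [Complex.sq_norm, Complex.normSq_apply]
    simp only [Complex.add_re, Complex.add_im, Complex.mul_re, Complex.mul_im, Complex.I_re,
      Complex.I_im, Complex.ofReal_re, Complex.ofReal_im]
    ring
  refine ⟨?_, ?_, ?_, ?_⟩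
  · show ‖(U.mulVec fun w => if w = ![false, false] then (1 : ℂ) else 0) ![false,false]‖ ^ 2 = _
    rw [hamp, show (evec ![false,false] ![false,false] : ℂ) = 1 from if_pos (by decide),
      show (evec ![false,true] ![false,false] : ℂ) = 0 from if_neg (by decide),
      show (evec ![true,false] ![false,false] : ℂ) = 0 from if_neg (by decide),
      show (evec ![true,true] ![false,false] : ℂ) = 0 from if_neg (by decide)]
    have : (c3 * (c1 * c2) + s3 * (s1 * s2)) * 1 + (c3 * (c1 * s2) + s3 * (s1 * c2)) * 0
        + (c3 * (s1 * c2) + s3 * (c1 * s2)) * 0 + (c3 * (s1 * s2) + s3 * (c1 * c2)) * 0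
        = ((Real.cos θ12 * (Real.cos θ1 * Real.cos θ2) : ℝ) : ℂ)
          + Complex.I * ((-(Real.sin θ12 * (Real.sin θ1 * Real.sin θ2)) : ℝ) : ℂ) := by
      rw [hc1, hc2, hc3, hs1, hs2, hs3]
      push_cast
      linear_combination (Complex.I * (Complex.sin (θ12:ℂ) * (Complex.sin (θ1:ℂ) * Complex.sin (θ2:ℂ)))) * Complex.I_sq
    rw [this, hnorm]
    show _ = Real.cos θ1 ^ 2 * Real.cos θ2 ^ 2 * Real.cos θ12 ^ 2
      + (1 - Real.cos θ1 ^ 2) * (1 - Real.cos θ2 ^ 2) * (1 - Real.cos θ12 ^ 2)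
    rw [show (1:ℝ) - Real.cos θ1 ^ 2 = Real.sin θ1 ^ 2 from (Real.sin_sq θ1).symm,
      show (1:ℝ) - Real.cos θ2 ^ 2 = Real.sin θ2 ^ 2 from (Real.sin_sq θ2).symm,
      show (1:ℝ) - Real.cos θ12 ^ 2 = Real.sin θ12 ^ 2 from (Real.sin_sq θ12).symm]
    ring
  · show ‖(U.mulVec fun w => if w = ![false, false] then (1 : ℂ) else 0) ![true,false]‖ ^ 2 = _
    rw [hamp, show (evec ![false,false] ![true,false] : ℂ) = 0 from if_neg (by decide),
      show (evec ![false,true] ![true,false] : ℂ) = 0 from if_neg (by decide),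
      show (evec ![true,false] ![true,false] : ℂ) = 1 from if_pos (by decide),
      show (evec ![true,true] ![true,false] : ℂ) = 0 from if_neg (by decide)]
    have : (c3 * (c1 * c2) + s3 * (s1 * s2)) * 0 + (c3 * (c1 * s2) + s3 * (s1 * c2)) * 0
        + (c3 * (s1 * c2) + s3 * (c1 * s2)) * 1 + (c3 * (s1 * s2) + s3 * (c1 * c2)) * 0
        = ((-(Real.sin θ12 * (Real.cos θ1 * Real.sin θ2)) : ℝ) : ℂ)
          + Complex.I * ((Real.cos θ12 * (Real.sin θ1 * Real.cos θ2) : ℝ) : ℂ) := by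
      rw [hc1, hc2, hc3, hs1, hs2, hs3]
      push_cast
      linear_combination (Complex.sin (θ12:ℂ) * (Complex.cos (θ1:ℂ) * Complex.sin (θ2:ℂ))) * Complex.I_sq
    rw [this, hnorm]
    show _ = Real.cos θ1 ^ 2 * (1 - Real.cos θ2 ^ 2) * (1 - Real.cos θ12 ^ 2)
      + (1 - Real.cos θ1 ^ 2) * Real.cos θ2 ^ 2 * Real.cos θ12 ^ 2
    rw [show (1:ℝ) - Real.cos θ1 ^ 2 = Real.sin θ1 ^ 2 from (Real.sin_sq θ1).symm,
      show (1:ℝ) - Real.cos θ2 ^ 2 = Real.sin θ2 ^ 2 from (Real.sin_sq θ2).symm,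
      show (1:ℝ) - Real.cos θ12 ^ 2 = Real.sin θ12 ^ 2 from (Real.sin_sq θ12).symm]
    ring
  · show ‖(U.mulVec fun w => if w = ![false, false] then (1 : ℂ) else 0) ![false,true]‖ ^ 2 = _
    rw [hamp, show (evec ![false,false] ![false,true] : ℂ) = 0 from if_neg (by decide),
      show (evec ![false,true] ![false,true] : ℂ) = 1 from if_pos (by decide),
      show (evec ![true,false] ![false,true] : ℂ) = 0 from if_neg (by decide),
      show (evec ![true,true] ![false,true] : ℂ) = 0 from if_neg (by decide)]
    have : (c3 * (c1 * c2) + s3 * (s1 * s2)) * 0 + (c3 * (c1 * s2) + s3 * (s1 * c2)) * 1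
        + (c3 * (s1 * c2) + s3 * (c1 * s2)) * 0 + (c3 * (s1 * s2) + s3 * (c1 * c2)) * 0
        = ((-(Real.sin θ12 * (Real.sin θ1 * Real.cos θ2)) : ℝ) : ℂ)
          + Complex.I * ((Real.cos θ12 * (Real.cos θ1 * Real.sin θ2) : ℝ) : ℂ) := by
      rw [hc1, hc2, hc3, hs1, hs2, hs3]
      push_cast
      linear_combination (Complex.sin (θ12:ℂ) * (Complex.sin (θ1:ℂ) * Complex.cos (θ2:ℂ))) * Complex.I_sq
    rw [this, hnorm]
    show _ = (1 - Real.cos θ1 ^ 2) * Real.cos θ2 ^ 2 * (1 - Real.cos θ12 ^ 2)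
      + Real.cos θ1 ^ 2 * (1 - Real.cos θ2 ^ 2) * Real.cos θ12 ^ 2
    rw [show (1:ℝ) - Real.cos θ1 ^ 2 = Real.sin θ1 ^ 2 from (Real.sin_sq θ1).symm,
      show (1:ℝ) - Real.cos θ2 ^ 2 = Real.sin θ2 ^ 2 from (Real.sin_sq θ2).symm,
      show (1:ℝ) - Real.cos θ12 ^ 2 = Real.sin θ12 ^ 2 from (Real.sin_sq θ12).symm]
    ring
  · show ‖(U.mulVec fun w => if w = ![false, false] then (1 : ℂ) else 0) ![true,true]‖ ^ 2 = _
    rw [hamp, show (evec ![false,false] ![true,true] : ℂ) = 0 from if_neg (by decide),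
      show (evec ![false,true] ![true,true] : ℂ) = 0 from if_neg (by decide),
      show (evec ![true,false] ![true,true] : ℂ) = 0 from if_neg (by decide),
      show (evec ![true,true] ![true,true] : ℂ) = 1 from if_pos (by decide)]
    have : (c3 * (c1 * c2) + s3 * (s1 * s2)) * 0 + (c3 * (c1 * s2) + s3 * (s1 * c2)) * 0
        + (c3 * (s1 * c2) + s3 * (c1 * s2)) * 0 + (c3 * (s1 * s2) + s3 * (c1 * c2)) * 1
        = ((-(Real.cos θ12 * (Real.sin θ1 * Real.sin θ2)) : ℝ) : ℂ)
          + Complex.I * ((Real.sin θ12 * (Real.cos θ1 * Real.cos θ2) : ℝ) : ℂ) := by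
      rw [hc1, hc2, hc3, hs1, hs2, hs3]
      push_cast
      linear_combination (Complex.cos (θ12:ℂ) * (Complex.sin (θ1:ℂ) * Complex.sin (θ2:ℂ))) * Complex.I_sq
    rw [this, hnorm]
    show _ = (1 - Real.cos θ1 ^ 2) * (1 - Real.cos θ2 ^ 2) * Real.cos θ12 ^ 2
      + Real.cos θ1 ^ 2 * Real.cos θ2 ^ 2 * (1 - Real.cos θ12 ^ 2)
    rw [show (1:ℝ) - Real.cos θ1 ^ 2 = Real.sin θ1 ^ 2 from (Real.sin_sq θ1).symm,
      show (1:ℝ) - Real.cos θ2 ^ 2 = Real.sin θ2 ^ 2 from (Real.sin_sq θ2).symm,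
      show (1:ℝ) - Real.cos θ12 ^ 2 = Real.sin θ12 ^ 2 from (Real.sin_sq θ12).symm]
    ring
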